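/- arXiv:2203.16283 — 2 statements merged into one kernel-verified Lean document; each statement's English description precedes it below -/
import Mathlib

section
/- Let 𝕋 ⊆ ℝ be closed with inf 𝕋 = -∞ and sup 𝕋 = +∞, let t₀ ∈ 𝕋, and define for t ∈ 𝕋, t ≥ t₀: s(t) = m([t₀,t] ∩ 𝕋) + ∑_{τ ∈ [t₀,t) ∩ 𝕋, μ(τ) > 0} log(1 + μ(τ)), where m is Lebesgue measure and μ(τ) = σ(τ) - τ is the graininess. Then s is strictly monotone increasing on 𝕋 ∩ [t₀,∞), s(t₀) = 0, and |s(t)| ≤ t - t₀ for all t ∈ 𝕋, t ≥ t₀. -/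
open scoped ENNReal

/-- Forward jump operator of a time scale. -/
noncomputable def tsSigma (T : Set ℝ) (t : ℝ) : ℝ := sInf {u : ℝ | u ∈ T ∧ t < u}

/-- Graininess function of a time scale. -/
noncomputable def tsMu (T : Set ℝ) (t : ℝ) : ℝ := tsSigma T t - t

/-- Renormalization function on `𝕋 ∩ [t₀, ∞)`:
`s(t) = m([t₀,t] ∩ 𝕋) + ∑_{τ ∈ [t₀,t) ∩ 𝕋, μ(τ)>0} log(1 + μ(τ))`. -/
noncomputable def tsRenorm (T : Set ℝ) (t₀ t : ℝ) : ℝ :=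
  (MeasureTheory.volume (Set.Icc t₀ t ∩ T)).toReal +
    ∑' τ : {τ : ℝ // τ ∈ T ∧ τ ∈ Set.Ico t₀ t ∧ 0 < tsMu T τ},
      Real.log (1 + tsMu T (τ : ℝ))

open MeasureTheory Set

namespace TsAux

variable {T : Set ℝ}

/-- The gap set. -/
def gaps (T : Set ℝ) (a b : ℝ) : Set ℝ := {τ : ℝ | τ ∈ T ∧ τ ∈ Set.Ico a b ∧ 0 < tsMu T τ}

lemma sigma_nonempty (habove : ¬BddAbove T) (t : ℝ) : {u : ℝ | u ∈ T ∧ t < u}.Nonempty := by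
  rw [not_bddAbove_iff] at habove
  obtain ⟨v, hv, hlt⟩ := habove t
  exact ⟨v, hv, hlt⟩

lemma le_tsSigma (habove : ¬BddAbove T) (t : ℝ) : t ≤ tsSigma T t :=
  le_csInf (sigma_nonempty habove t) fun _ hb => le_of_lt hb.2

lemma tsSigma_le {t u : ℝ} (hu : u ∈ T) (h : t < u) : tsSigma T t ≤ u :=
  csInf_le ⟨t, fun _ hv => le_of_lt hv.2⟩ ⟨hu, h⟩

lemma Ioo_inter_eq_empty (habove : ¬BddAbove T) (t : ℝ) :
    Set.Ioo t (tsSigma T t) ∩ T = ∅ := by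
  ext v
  simp only [Set.mem_inter_iff, Set.mem_Ioo, Set.mem_empty_iff_false, iff_false]
  rintro ⟨⟨h1, h2⟩, hv⟩
  exact absurd (tsSigma_le hv h1) (not_le.mpr h2)

/-- Finite sums of graininesses of gaps in `[a,b)` are bounded. -/
lemma sum_mu_le (habove : ¬BddAbove T) (hT : IsClosed T) {a b : ℝ} (hb : b ∈ T) (hab : a ≤ b)
    (F : Finset ℝ) (hF : ∀ τ ∈ F, τ ∈ gaps T a b) :
    ∑ τ ∈ F, tsMu T τ ≤ (b - a) - (volume (Set.Icc a b ∩ T)).toReal := by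
  set G : Set ℝ := ⋃ τ ∈ F, Set.Ioo τ (tsSigma T τ) with hG
  have hdisj : (↑F : Set ℝ).PairwiseDisjoint fun τ => Set.Ioo τ (tsSigma T τ) := by
    have key : ∀ x ∈ F, ∀ y ∈ F, x < y →
        Disjoint (Set.Ioo x (tsSigma T x)) (Set.Ioo y (tsSigma T y)) := by
      intro x _ y hy hlt
      have hyT : y ∈ T := (hF y hy).1
      have hsx : tsSigma T x ≤ y := tsSigma_le hyT hlt
      exact Set.disjoint_left.mpr fun z hz hz' =>
        absurd hz'.1 (not_lt.mpr (hz.2.le.trans hsx))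
    intro x hx y hy hxy
    rcases hxy.lt_or_gt with h | h
    · exact key x (Finset.mem_coe.mp hx) y (Finset.mem_coe.mp hy) h
    · exact (key y (Finset.mem_coe.mp hy) x (Finset.mem_coe.mp hx) h).symm
  have hGvol : volume G = ∑ τ ∈ F, ENNReal.ofReal (tsMu T τ) := by
    rw [hG, measure_biUnion_finset hdisj (fun τ _ => measurableSet_Ioo)]
    refine Finset.sum_congr rfl fun τ _ => ?_
    rw [Real.volume_Ioo]; rfl
  have hGsub : G ⊆ Set.Icc a b \ T := by
    rintro z hz
    simp only [hG, Set.mem_iUnion] at hz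
    obtain ⟨τ, hτF, hzmem⟩ := hz
    obtain ⟨hτT, ⟨hτa, hτb⟩, _⟩ := hF τ hτF
    have hsb : tsSigma T τ ≤ b := tsSigma_le hb hτb
    refine ⟨⟨hτa.trans hzmem.1.le, hzmem.2.le.trans hsb⟩, fun hzT => ?_⟩
    have := Ioo_inter_eq_empty habove τ
    exact absurd (Set.mem_inter hzmem hzT) (by rw [this]; exact Set.notMem_empty z)
  have hGT : Disjoint G (Set.Icc a b ∩ T) := by
    refine Set.disjoint_left.mpr fun z hz hz' => (hGsub hz).2 hz'.2
  have hGmeas : MeasurableSet G := MeasurableSet.biUnion F.countable_toSet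
    (fun τ _ => measurableSet_Ioo)
  have hsum_le : volume G + volume (Set.Icc a b ∩ T) ≤ ENNReal.ofReal (b - a) := by
    rw [← measure_union hGT (hT.measurableSet.inter (measurableSet_Icc (a := a) (b := b))
      |>.congr (Set.inter_comm _ _))]
    · calc volume (G ∪ Set.Icc a b ∩ T) ≤ volume (Set.Icc a b) := by
            apply measure_mono
            rintro z (hz | hz)
            · exact (hGsub hz).1
            · exact hz.1
        _ = ENNReal.ofReal (b - a) := Real.volume_Icc
  have hfin : volume (Set.Icc a b ∩ T) ≠ ⊤ :=
    ne_top_of_le_ne_top (by rw [Real.volume_Icc]; exact ENNReal.ofReal_ne_top)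
      (measure_mono Set.inter_subset_left)
  have hGfin : volume G ≠ ⊤ :=
    ne_top_of_le_ne_top ENNReal.ofReal_ne_top (le_trans le_self_add hsum_le)
  have h1 : (volume G).toReal + (volume (Set.Icc a b ∩ T)).toReal ≤ b - a := by
    rw [← ENNReal.toReal_add hGfin hfin]
    calc (volume G + volume (Set.Icc a b ∩ T)).toReal
        ≤ (ENNReal.ofReal (b - a)).toReal := ENNReal.toReal_mono ENNReal.ofReal_ne_top hsum_le
      _ = b - a := ENNReal.toReal_ofReal (by linarith)
  have h2 : ∑ τ ∈ F, tsMu T τ = (volume G).toReal := by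
    rw [hGvol, ENNReal.toReal_sum (fun τ _ => ENNReal.ofReal_ne_top)]
    exact Finset.sum_congr rfl fun τ hτ =>
      (ENNReal.toReal_ofReal (le_of_lt (hF τ hτ).2.2)).symm
  linarith

lemma log_le_mu {τ : ℝ} (h : 0 < tsMu T τ) : Real.log (1 + tsMu T τ) ≤ tsMu T τ := by
  have := Real.log_le_sub_one_of_pos (x := 1 + tsMu T τ) (by linarith)
  linarith

lemma log_nonneg' {τ : ℝ} (h : 0 < tsMu T τ) : 0 ≤ Real.log (1 + tsMu T τ) :=
  Real.log_nonneg (by linarith)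

/-- Finite subtype sums of the log terms are bounded. -/
lemma sum_log_le (habove : ¬BddAbove T) (hT : IsClosed T) {a b : ℝ} (hb : b ∈ T) (hab : a ≤ b)
    (F : Finset (gaps T a b)) :
    ∑ τ ∈ F, Real.log (1 + tsMu T (τ : ℝ)) ≤ (b - a) - (volume (Set.Icc a b ∩ T)).toReal := by
  calc ∑ τ ∈ F, Real.log (1 + tsMu T (τ : ℝ))
      ≤ ∑ τ ∈ F, tsMu T (τ : ℝ) := Finset.sum_le_sum fun τ _ => log_le_mu τ.2.2.2
    _ = ∑ τ ∈ F.image Subtype.val, tsMu T τ :=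
        (Finset.sum_image (fun x _ y _ h => Subtype.val_injective h)).symm
    _ ≤ _ := sum_mu_le habove hT hb hab _ (by
        intro τ hτ
        simp only [Finset.mem_image] at hτ
        obtain ⟨⟨τ', hτ'⟩, _, rfl⟩ := hτ
        exact hτ')

lemma summable_log (habove : ¬BddAbove T) (hT : IsClosed T) {a b : ℝ} (hb : b ∈ T) (hab : a ≤ b) :
    Summable (fun τ : gaps T a b => Real.log (1 + tsMu T (τ : ℝ))) :=
  summable_of_sum_le (fun τ => log_nonneg' τ.2.2.2) (sum_log_le habove hT hb hab)

lemma tsum_log_le (habove : ¬BddAbove T) (hT : IsClosed T) {a b : ℝ} (hb : b ∈ T) (hab : a ≤ b) :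
    ∑' τ : gaps T a b, Real.log (1 + tsMu T (τ : ℝ))
      ≤ (b - a) - (volume (Set.Icc a b ∩ T)).toReal :=
  Summable.tsum_le_of_sum_le (summable_log habove hT hb hab) (sum_log_le habove hT hb hab)

lemma tsum_log_nonneg {a b : ℝ} :
    0 ≤ ∑' τ : gaps T a b, Real.log (1 + tsMu T (τ : ℝ)) :=
  tsum_nonneg fun τ => log_nonneg' τ.2.2.2

lemma renorm_eq (t₀ t : ℝ) :
    tsRenorm T t₀ t = (volume (Set.Icc t₀ t ∩ T)).toReal
      + ∑' τ : gaps T t₀ t, Real.log (1 + tsMu T (τ : ℝ)) := rfl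

lemma vol_ne_top (a b : ℝ) : volume (Set.Icc a b ∩ T) ≠ ⊤ :=
  ne_top_of_le_ne_top (by rw [Real.volume_Icc]; exact ENNReal.ofReal_ne_top)
    (measure_mono Set.inter_subset_left)

/-- If there are no gaps in `[t,u)`, with `t, u ∈ T`, then `Icc t u ⊆ T`. -/
lemma Icc_subset_of_no_gaps (habove : ¬BddAbove T) (hT : IsClosed T) {t u : ℝ}
    (ht : t ∈ T) (hu : u ∈ T) (htu : t ≤ u) (hgaps : gaps T t u = ∅) :
    Set.Icc t u ⊆ T := by
  intro x hx
  by_contra hxT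
  have hxt : t < x := lt_of_le_of_ne hx.1 (fun h => hxT (h ▸ ht))
  have hxu : x < u := lt_of_le_of_ne hx.2 (fun h => hxT (h ▸ hu))
  set C : Set ℝ := T ∩ Set.Icc t x with hC
  have hCclosed : IsClosed C := hT.inter isClosed_Icc
  have hCne : C.Nonempty := ⟨t, ht, le_refl t, hxt.le⟩
  have hCbdd : BddAbove C := ⟨x, fun v hv => hv.2.2⟩
  set τ := sSup C with hτ
  have hτC : τ ∈ C := hCclosed.csSup_mem hCne hCbdd
  have hτT : τ ∈ T := hτC.1
  have hτx : τ ≤ x := hτC.2.2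
  have hτltx : τ < x := lt_of_le_of_ne hτx (fun h => hxT (h ▸ hτT))
  have hxle : x ≤ tsSigma T τ := by
    apply le_csInf (sigma_nonempty habove τ)
    rintro v ⟨hvT, hvτ⟩
    by_contra hvx
    push_neg at hvx
    have hvC : v ∈ C := ⟨hvT, (hτC.2.1.trans hvτ.le), hvx.le⟩
    exact absurd (le_csSup hCbdd hvC) (not_le.mpr hvτ)
  have hμ : 0 < tsMu T τ := by
    have : τ < tsSigma T τ := lt_of_lt_of_le hτltx hxle
    simp only [tsMu]; linarith
  have : τ ∈ gaps T t u := ⟨hτT, ⟨hτC.2.1, lt_of_le_of_lt hτx hxu⟩, hμ⟩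
  rw [hgaps] at this
  exact this

lemma gaps_split {t₀ t u : ℝ} (h1 : t₀ ≤ t) (h2 : t ≤ u) :
    gaps T t₀ u = gaps T t₀ t ∪ gaps T t u := by
  ext τ
  simp only [gaps, Set.mem_setOf_eq, Set.mem_union]
  constructor
  · rintro ⟨hT', hIco, hμ⟩
    rcases lt_or_ge τ t with h | h
    · exact Or.inl ⟨hT', ⟨hIco.1, h⟩, hμ⟩
    · exact Or.inr ⟨hT', ⟨h, hIco.2⟩, hμ⟩
  · rintro (⟨hT', hIco, hμ⟩ | ⟨hT', hIco, hμ⟩)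
    · exact ⟨hT', ⟨hIco.1, lt_of_lt_of_le hIco.2 h2⟩, hμ⟩
    · exact ⟨hT', ⟨le_trans h1 hIco.1, hIco.2⟩, hμ⟩

lemma gaps_disjoint {t₀ t u : ℝ} : Disjoint (gaps T t₀ t) (gaps T t u) :=
  Set.disjoint_left.mpr fun τ h1 h2 => absurd h2.2.1.1 (not_le.mpr h1.2.1.2)

lemma vol_split (hT : IsClosed T) {t₀ t u : ℝ} (h1 : t₀ ≤ t) (h2 : t ≤ u) :
    volume (Set.Icc t₀ u ∩ T) = volume (Set.Icc t₀ t ∩ T) + volume (Set.Ioc t u ∩ T) := by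
  have heq : Set.Icc t₀ u ∩ T = (Set.Icc t₀ t ∩ T) ∪ (Set.Ioc t u ∩ T) := by
    rw [← Set.union_inter_distrib_right, Set.Icc_union_Ioc_eq_Icc h1 h2]
  have hd : Disjoint (Set.Icc t₀ t ∩ T) (Set.Ioc t u ∩ T) :=
    Set.disjoint_left.mpr fun z hz hz' => absurd hz'.1.1 (not_lt.mpr hz.1.2)
  rw [heq, measure_union hd (measurableSet_Ioc.inter hT.measurableSet)]

end TsAux

/-- The renormalization `s` is strictly increasing on `𝕋 ∩ [t₀, ∞)`, vanishes at `t₀`, and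
satisfies `|s(t)| ≤ t - t₀`. -/
theorem tsRenorm_strictMono_and_bound (T : Set ℝ) (hT : IsClosed T)
    (hbelow : ¬BddBelow T) (habove : ¬BddAbove T) (t₀ : ℝ) (ht₀ : t₀ ∈ T) :
    StrictMonoOn (tsRenorm T t₀) (T ∩ Set.Ici t₀) ∧
    tsRenorm T t₀ t₀ = 0 ∧
    ∀ t ∈ T, t₀ ≤ t → |tsRenorm T t₀ t| ≤ t - t₀ := by
  open TsAux MeasureTheory Set in
  refine ⟨?_, ?_, ?_⟩
  · -- strict monotonicity
    rintro t ⟨htT, ht0⟩ u ⟨huT, hu0⟩ htu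
    have hAs := summable_log habove hT htT ht0
    have hBs : Summable (fun τ : gaps T t u => Real.log (1 + tsMu T (τ : ℝ))) :=
      summable_log habove hT huT htu.le
    have hsum : (∑' τ : gaps T t₀ u, Real.log (1 + tsMu T (τ : ℝ)))
        = (∑' τ : gaps T t₀ t, Real.log (1 + tsMu T (τ : ℝ)))
        + ∑' τ : gaps T t u, Real.log (1 + tsMu T (τ : ℝ)) := by
      rw [gaps_split ht0 htu.le]
      exact Summable.tsum_union_disjoint (f := fun τ : ℝ => Real.log (1 + tsMu T τ))
        gaps_disjoint hAs hBs
    have hIocfin : volume (Set.Ioc t u ∩ T) ≠ ⊤ :=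
      ne_top_of_le_ne_top (by rw [Real.volume_Ioc]; exact ENNReal.ofReal_ne_top)
        (measure_mono Set.inter_subset_left)
    have hvol : (volume (Set.Icc t₀ u ∩ T)).toReal
        = (volume (Set.Icc t₀ t ∩ T)).toReal + (volume (Set.Ioc t u ∩ T)).toReal := by
      rw [vol_split hT ht0 htu.le, ENNReal.toReal_add (vol_ne_top t₀ t) hIocfin]
    rw [renorm_eq, renorm_eq, hsum, hvol]
    have key : 0 < (volume (Set.Ioc t u ∩ T)).toReal
        + ∑' τ : gaps T t u, Real.log (1 + tsMu T (τ : ℝ)) := by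
      rcases Set.eq_empty_or_nonempty (gaps T t u) with hemp | ⟨τ, hτ⟩
      · have hsub : Set.Icc t u ⊆ T :=
          Icc_subset_of_no_gaps habove hT htT huT htu.le hemp
        have : Set.Ioc t u ∩ T = Set.Ioc t u :=
          Set.inter_eq_left.mpr fun z hz => hsub ⟨hz.1.le, hz.2⟩
        rw [this, Real.volume_Ioc, ENNReal.toReal_ofReal (by linarith)]
        have h0 : (0:ℝ) ≤ ∑' τ : gaps T t u, Real.log (1 + tsMu T (τ : ℝ)) :=
          tsum_log_nonneg
        linarith
      · have hpos : 0 < ∑' τ : gaps T t u, Real.log (1 + tsMu T (τ : ℝ)) :=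
          Summable.tsum_pos (summable_log habove hT huT htu.le)
            (fun τ => log_nonneg' τ.2.2.2) ⟨τ, hτ⟩
            (Real.log_pos (by have := hτ.2.2; linarith))
        have h0 : (0:ℝ) ≤ (volume (Set.Ioc t u ∩ T)).toReal := ENNReal.toReal_nonneg
        linarith
    linarith
  · -- value at t₀
    rw [renorm_eq]
    have h1 : volume (Set.Icc t₀ t₀ ∩ T) = 0 := by
      refine le_antisymm ?_ zero_le
      calc volume (Set.Icc t₀ t₀ ∩ T) ≤ volume {t₀} := by
            apply measure_mono; rw [Set.Icc_self]; exact Set.inter_subset_left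
        _ = 0 := Real.volume_singleton
    have h2 : gaps T t₀ t₀ = ∅ := by
      ext τ; simp [gaps, Set.Ico_self]
    rw [h1, h2]
    simp [tsum_empty]
  · -- bound
    intro t htT ht0
    rw [renorm_eq]
    have h1 : ∑' τ : gaps T t₀ t, Real.log (1 + tsMu T (τ : ℝ))
        ≤ (t - t₀) - (volume (Set.Icc t₀ t ∩ T)).toReal :=
      tsum_log_le habove hT htT ht0
    have h2 : (0:ℝ) ≤ ∑' τ : gaps T t₀ t, Real.log (1 + tsMu T (τ : ℝ)) :=
      tsum_log_nonneg
    have h3 : (0:ℝ) ≤ (volume (Set.Icc t₀ t ∩ T)).toReal := ENNReal.toReal_nonneg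
    rw [abs_le]
    constructor <;> linarith
end

section
/- (Scalar boundedness of renormalized coefficient.) Suppose a : ℝ → ℝ and μ : ℝ → [0,∞) satisfy: |a(t)| ≤ M, |1/(1 + μ(t)a(t))| ≤ M, and either μ is bounded by some μ̄, or |1/a(t)| ≤ M for all t. Then the function b(t) := log(1 + μ(t)a(t))/log(1 + μ(t)) (interpreted as a(t) when μ(t) = 0) is bounded: there exists C depending only on M (and μ̄ in the first case) with |b(t)| ≤ C for all t with μ(t) > 0 implying 1 + μ(t)a(t) > 0. -/
/-- Scalar analogue of Lemma 2: under uniform bounds on `a` and uniform regressivity,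
and either bounded graininess or uniform invertibility of `a`, the renormalized coefficient
`b(t) = log(1 + μ(t)a(t))/log(1 + μ(t))` (equal to `a(t)` when `μ(t) = 0`) is uniformly
bounded. -/
theorem renormalized_coefficient_bounded (a μ : ℝ → ℝ) (M : ℝ) (hM : 0 < M)
    (hμnonneg : ∀ t, 0 ≤ μ t)
    (hreg : ∀ t, 0 < 1 + μ t * a t)
    (haM : ∀ t, |a t| ≤ M)
    (hregM : ∀ t, |(1 + μ t * a t)⁻¹| ≤ M)
    (halt : (∃ μbar : ℝ, ∀ t, μ t ≤ μbar) ∨ (∀ t, |(a t)⁻¹| ≤ M))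
    (b : ℝ → ℝ)
    (hb0 : ∀ t, μ t = 0 → b t = a t)
    (hb : ∀ t, 0 < μ t → b t = Real.log (1 + μ t * a t) / Real.log (1 + μ t)) :
    ∃ C : ℝ, 0 < C ∧ ∀ t, |b t| ≤ C := by
  set δ : ℝ := Real.log (1 + (2 * M)⁻¹) with hδdef
  have h2M : (0:ℝ) < (2 * M)⁻¹ := by positivity
  have hδ : 0 < δ := Real.log_pos (by linarith)
  clear_value δ
  have hlog1M : 0 ≤ Real.log (1 + M) := Real.log_nonneg (by linarith)
  set C : ℝ := (2 * M + 1) + 1 + Real.log (1 + M) / δ + |Real.log M| / δ with hCdef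
  have hC : 0 < C := by positivity
  clear_value C
  refine ⟨C, hC, fun t => ?_⟩
  rcases eq_or_lt_of_le (hμnonneg t) with h0 | hμpos
  · rw [hb0 t h0.symm]
    have := haM t
    have : M ≤ C := by
      have h1 : 0 ≤ Real.log (1 + M) / δ := by positivity
      have h2 : 0 ≤ |Real.log M| / δ := by positivity
      simp only [hCdef]; linarith
    linarith [haM t]
  · rw [hb t hμpos]
    set u := 1 + μ t * a t with hudef
    have hu : 0 < u := hreg t
    clear_value u
    set L := Real.log (1 + μ t) with hLdef
    have hL : 0 < L := Real.log_pos (by linarith)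
    clear_value L
    have hLlow : μ t / (1 + μ t) ≤ L := by
      have h1 : (0:ℝ) < (1 + μ t)⁻¹ := by positivity
      have h2 := Real.log_le_sub_one_of_pos h1
      rw [Real.log_inv] at h2
      have : 1 - (1 + μ t)⁻¹ = μ t / (1 + μ t) := by
        field_simp
        ring
      linarith
    have haMt := haM t
    have haM1 : -M ≤ a t := (abs_le.mp haMt).1
    have haM2 : a t ≤ M := (abs_le.mp haMt).2
    -- reduce to |log u| ≤ C * L
    rw [abs_div, abs_of_pos hL, div_le_iff₀ hL]
    rcases le_or_gt (μ t) ((2 * M)⁻¹) with hsmall | hbig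
    · -- small graininess: |log u| ≤ 2 μ M ≤ (2M+1) L ≤ C L
      have hμM : μ t * M ≤ 1 / 2 := by
        rw [le_div_iff₀ (by norm_num : (0:ℝ) < 2)]
        calc μ t * M * 2 ≤ (2 * M)⁻¹ * M * 2 := by nlinarith
          _ = 1 := by field_simp
      have hup : Real.log u ≤ 2 * (μ t * M) := by
        have h1 : u ≤ 1 + μ t * M := by nlinarith
        have h2 := Real.log_le_sub_one_of_pos hu
        nlinarith
      have hlo : -Real.log u ≤ 2 * (μ t * M) := by
        have hpos : 0 < 1 - μ t * M := by linarith
        have h1 : 1 - μ t * M ≤ u := by nlinarith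
        have h2 : u⁻¹ ≤ (1 - μ t * M)⁻¹ := by
          apply inv_anti₀ hpos h1
        have h3 := Real.log_le_sub_one_of_pos (inv_pos.mpr hu)
        rw [Real.log_inv] at h3
        have h4 : (1 - μ t * M)⁻¹ - 1 = μ t * M / (1 - μ t * M) := by field_simp; ring
        have h5 : μ t * M / (1 - μ t * M) ≤ 2 * (μ t * M) := by
          rw [div_le_iff₀ hpos]
          nlinarith [mul_nonneg hμpos.le hM.le]
        have h6 : u⁻¹ - 1 ≤ 2 * (μ t * M) := by
          calc u⁻¹ - 1 ≤ (1 - μ t * M)⁻¹ - 1 := by linarith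
            _ = μ t * M / (1 - μ t * M) := h4
            _ ≤ 2 * (μ t * M) := h5
        linarith
      have habs : |Real.log u| ≤ 2 * (μ t * M) := abs_le.mpr ⟨by linarith, hup⟩
      have key : 2 * (μ t * M) ≤ (2 * M + 1) * L := by
        have h1 : (2 * M + 1) * (μ t / (1 + μ t)) ≥ 2 * (μ t * M) := by
          rw [ge_iff_le, ← mul_div_assoc, le_div_iff₀ (by linarith : (0:ℝ) < 1 + μ t)]
          nlinarith [mul_nonneg hμpos.le hM.le]
        have h2 : (2 * M + 1) * (μ t / (1 + μ t)) ≤ (2 * M + 1) * L :=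
          mul_le_mul_of_nonneg_left hLlow (by linarith)
        linarith
      have hCge : 2 * M + 1 ≤ C := by
        have h1 : 0 ≤ Real.log (1 + M) / δ := by positivity
        have h2 : 0 ≤ |Real.log M| / δ := by positivity
        simp only [hCdef]; linarith
      calc |Real.log u| ≤ (2 * M + 1) * L := le_trans habs key
        _ ≤ C * L := mul_le_mul_of_nonneg_right hCge hL.le
    · -- large graininess: L ≥ δ
      have hLδ : δ ≤ L := by
        rw [hδdef, hLdef]
        apply Real.log_le_log (by positivity)
        linarith
      have hup : Real.log u ≤ L + Real.log (1 + M) := by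
        have hprod : μ t * a t ≤ μ t * M := mul_le_mul_of_nonneg_left haM2 (hμnonneg t)
        have h1 : u ≤ (1 + μ t) * (1 + M) := by
          have hexp : (1 + μ t) * (1 + M) = 1 + μ t * M + M + μ t := by ring
          rw [hudef, hexp]
          linarith
        calc Real.log u ≤ Real.log ((1 + μ t) * (1 + M)) := Real.log_le_log hu h1
          _ = L + Real.log (1 + M) := by
              rw [Real.log_mul (by linarith) (by linarith), hLdef]
      have hlo : -Real.log u ≤ |Real.log M| := by
        have h1 : u⁻¹ ≤ M := by rw [hudef]; exact le_of_abs_le (hregM t)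
        have h2 : M⁻¹ ≤ u := by
          nlinarith [inv_mul_cancel₀ hu.ne', inv_mul_cancel₀ hM.ne',
            mul_le_mul_of_nonneg_right h1 hu.le]
        have h3 : Real.log M⁻¹ ≤ Real.log u := Real.log_le_log (by positivity) h2
        rw [Real.log_inv] at h3
        have := le_abs_self (Real.log M)
        linarith
      have habs : |Real.log u| ≤ L + Real.log (1 + M) + |Real.log M| := by
        rw [abs_le]
        constructor
        · have : 0 ≤ L + Real.log (1 + M) := by linarith
          linarith
        · have : 0 ≤ |Real.log M| := abs_nonneg _
          linarith
      have key : L + Real.log (1 + M) + |Real.log M| ≤ C * L := by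
        have h1 : Real.log (1 + M) ≤ (Real.log (1 + M) / δ) * L := by
          rw [div_mul_eq_mul_div, le_div_iff₀ hδ]
          exact mul_le_mul_of_nonneg_left hLδ hlog1M
        have h2 : |Real.log M| ≤ (|Real.log M| / δ) * L := by
          rw [div_mul_eq_mul_div, le_div_iff₀ hδ]
          exact mul_le_mul_of_nonneg_left hLδ (abs_nonneg _)
        have h3 : (1 : ℝ) * L = L := one_mul L
        have hCexp : C * L = (2 * M + 1) * L + 1 * L + (Real.log (1 + M) / δ) * L
            + (|Real.log M| / δ) * L := by rw [hCdef]; ring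
        have h4 : 0 ≤ (2 * M + 1) * L := by positivity
        linarith
      linarith
end
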